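/- Every L-embedded Banach space is weakly sequentially complete. -/

import Mathlib

open NormedSpace Filter Topology

/-- A sequence spans `ℓ¹` asymptotically isometrically. -/
def SpansL1Asymptotically {X : Type*} [NormedAddCommGroup X] [NormedSpace ℝ X]
    (x : ℕ → X) : Prop :=
  ∃ δ : ℕ → ℝ, (∀ n, 0 ≤ δ n ∧ δ n < 1) ∧ Tendsto δ atTop (nhds 0) ∧
    ∀ (N : ℕ) (α : ℕ → ℝ),
      (∑ n ∈ Finset.range N, (1 - δ n) * |α n|) ≤ ‖∑ n ∈ Finset.range N, α n • x n‖ ∧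
      ‖∑ n ∈ Finset.range N, α n • x n‖ ≤ ∑ n ∈ Finset.range N, |α n|

/-- A sequence spans `ℓ¹` almost isometrically. -/
def SpansL1AlmostIsometrically {X : Type*} [NormedAddCommGroup X] [NormedSpace ℝ X]
    (x : ℕ → X) : Prop :=
  ∃ δ : ℕ → ℝ, (∀ n, 0 ≤ δ n ∧ δ n < 1) ∧ Tendsto δ atTop (nhds 0) ∧
    ∀ (m M : ℕ) (α : ℕ → ℝ),
      (1 - δ m) * (∑ n ∈ Finset.Icc m M, |α n|) ≤ ‖∑ n ∈ Finset.Icc m M, α n • x n‖ ∧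
      ‖∑ n ∈ Finset.Icc m M, α n • x n‖ ≤ ∑ n ∈ Finset.Icc m M, |α n|

/-- A sequence spans `c₀` asymptotically isometrically. -/
def SpansC0Asymptotically {X : Type*} [NormedAddCommGroup X] [NormedSpace ℝ X]
    (z : ℕ → X) : Prop :=
  ∃ δ : ℕ → ℝ, (∀ n, 0 ≤ δ n ∧ δ n < 1) ∧ Tendsto δ atTop (nhds 0) ∧
    ∀ (N : ℕ) (hN : N ≠ 0) (α : ℕ → ℝ),
      ((Finset.range N).sup' (Finset.nonempty_range_iff.mpr hN)
          (fun n => (1 - δ n) * |α n|)) ≤ ‖∑ n ∈ Finset.range N, α n • z n‖ ∧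
      ‖∑ n ∈ Finset.range N, α n • z n‖ ≤
        (Finset.range N).sup' (Finset.nonempty_range_iff.mpr hN)
          (fun n => (1 + δ n) * |α n|)

/-- `P` is an L-projection: an idempotent bounded operator with
`‖ξ‖ = ‖Pξ‖ + ‖ξ - Pξ‖` for all `ξ`. -/
def IsLProjection {E : Type*} [NormedAddCommGroup E] [NormedSpace ℝ E]
    (P : E →L[ℝ] E) : Prop :=
  (∀ ξ, P (P ξ) = P ξ) ∧ ∀ ξ, ‖ξ‖ = ‖P ξ‖ + ‖ξ - P ξ‖

/-- `X` is L-embedded: the canonical image of `X` in its bidual is the range of an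
L-projection. -/
def IsLEmbedded (X : Type*) [NormedAddCommGroup X] [NormedSpace ℝ X] : Prop :=
  ∃ P : StrongDual ℝ (StrongDual ℝ X) →L[ℝ] StrongDual ℝ (StrongDual ℝ X),
    (∀ ξ, P (P ξ) = P ξ) ∧ (∀ ξ, ‖ξ‖ = ‖P ξ‖ + ‖ξ - P ξ‖) ∧
      Set.range P = Set.range (inclusionInDoubleDual ℝ X)

noncomputable instance instNormedAddCommGroupBidual (X : Type*) [NormedAddCommGroup X]
    [NormedSpace ℝ X] : NormedAddCommGroup (StrongDual ℝ (StrongDual ℝ X)) := inferInstance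

noncomputable instance instNormedSpaceBidual (X : Type*) [NormedAddCommGroup X]
    [NormedSpace ℝ X] : NormedSpace ℝ (StrongDual ℝ (StrongDual ℝ X)) := inferInstance

/-- `X` is M-embedded: the annihilator of `X` in `X'''` is the range of an
L-projection on `X'''`. -/
def IsMEmbedded (X : Type*) [NormedAddCommGroup X] [NormedSpace ℝ X] : Prop :=
  ∃ P : StrongDual ℝ (StrongDual ℝ (StrongDual ℝ X)) →L[ℝ] StrongDual ℝ (StrongDual ℝ (StrongDual ℝ X)),
    (∀ φ, P (P φ) = P φ) ∧ (∀ φ, ‖φ‖ = ‖P φ‖ + ‖φ - P φ‖) ∧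
      Set.range P = {φ | ∀ x : X, φ (inclusionInDoubleDual ℝ X x) = 0}

/-- `X` fails the fixed point property: there are a nonempty closed bounded convex set and
a contractive self-map without fixed point. -/
def FailsFPP (X : Type*) [NormedAddCommGroup X] [NormedSpace ℝ X] : Prop :=
  ∃ C : Set X, C.Nonempty ∧ IsClosed C ∧ Bornology.IsBounded C ∧ Convex ℝ C ∧
    ∃ f : X → X, Set.MapsTo f C C ∧
      (∀ x ∈ C, ∀ y ∈ C, x ≠ y → ‖f x - f y‖ < ‖x - y‖) ∧
      ∀ x ∈ C, f x ≠ x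


section AuxWSC

variable {X : Type*} [NormedAddCommGroup X] [NormedSpace ℝ X]

private lemma sum_pair_aux {M : Type*} [AddCommMonoid M] (f : ℕ → M) (K : ℕ) :
    ∑ i ∈ Finset.range (2 * K), f i = ∑ k ∈ Finset.range K, (f (2 * k) + f (2 * k + 1)) := by
  induction K with
  | zero => simp
  | succ K ih =>
      have h : 2 * (K + 1) = (2 * K + 1) + 1 := by ring
      rw [h, Finset.sum_range_succ, Finset.sum_range_succ, ih, Finset.sum_range_succ]
      abel

private lemma step_lemma {a C' : ℝ} (ha : 0 < a) (w : ℕ → X) (hw : ∀ n, ‖w n‖ ≤ C')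
    (MI : ∀ (z : X) (t : ℝ) (ε : ℝ), 0 < ε →
      ∀ᶠ n in atTop, ‖z‖ + |t| * a - ε < ‖z + t • w n‖)
    (K N₀ : ℕ) (v : Fin K → X) {ε : ℝ} (hε : 0 < ε) :
    ∃ n, N₀ ≤ n ∧ ∀ (α : Fin K → ℝ) (t : ℝ),
      ‖∑ i, α i • v i‖ + |t| * a - ε * ((∑ i, |α i|) + |t|) ≤ ‖(∑ i, α i • v i) + t • w n‖ := by
  classical
  have hC0 : 0 ≤ C' := le_trans (norm_nonneg _) (hw 0)
  set V : ℝ := ∑ i, ‖v i‖ with hV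
  have hV0 : 0 ≤ V := Finset.sum_nonneg fun _ _ => norm_nonneg _
  set L : ℝ := V + C' + a + 1 with hLdef
  have hL0 : 0 < L := by positivity
  set δ : ℝ := ε / (4 * L) with hδdef
  have hδ0 : 0 < δ := by positivity
  -- basic diff bounds
  have hZsub : ∀ β γ : Fin K → ℝ,
      (∑ i, β i • v i) - (∑ i, γ i • v i) = ∑ i, (β i - γ i) • v i := by
    intro β γ
    rw [← Finset.sum_sub_distrib]
    refine Finset.sum_congr rfl fun i _ => (sub_smul _ _ _).symm
  have hcoord : ∀ (p q : (Fin K → ℝ) × ℝ) (i : Fin K), |p.1 i - q.1 i| ≤ dist p q := by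
    intro p q i
    have h1 : dist (p.1 i) (q.1 i) ≤ dist p.1 q.1 := dist_le_pi_dist _ _ i
    have h2 : dist p.1 q.1 ≤ dist p q := by
      rw [Prod.dist_eq]; exact le_max_left _ _
    rw [Real.dist_eq] at h1
    linarith
  have hsnd : ∀ (p q : (Fin K → ℝ) × ℝ), |p.2 - q.2| ≤ dist p q := by
    intro p q
    have h2 : dist p.2 q.2 ≤ dist p q := by
      rw [Prod.dist_eq]; exact le_max_right _ _
    rw [Real.dist_eq] at h2; exact h2
  have hZdiff : ∀ (p q : (Fin K → ℝ) × ℝ),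
      ‖(∑ i, p.1 i • v i) - (∑ i, q.1 i • v i)‖ ≤ dist p q * V := by
    intro p q
    rw [hZsub]
    calc ‖∑ i, (p.1 i - q.1 i) • v i‖ ≤ ∑ i, ‖(p.1 i - q.1 i) • v i‖ :=
          norm_sum_le _ _
      _ ≤ ∑ i, dist p q * ‖v i‖ := by
          refine Finset.sum_le_sum fun i _ => ?_
          rw [norm_smul, Real.norm_eq_abs]
          exact mul_le_mul_of_nonneg_right (hcoord p q i) (norm_nonneg _)
      _ = dist p q * V := by rw [hV, Finset.mul_sum]
  -- Lipschitz-type estimates (one-sided suffice)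
  have hGlip : ∀ (n : ℕ) (p q : (Fin K → ℝ) × ℝ),
      ‖(∑ i, q.1 i • v i) + q.2 • w n‖ - ‖(∑ i, p.1 i • v i) + p.2 • w n‖ ≤ L * dist p q := by
    intro n p q
    have h1 : ‖(∑ i, q.1 i • v i) + q.2 • w n‖ - ‖(∑ i, p.1 i • v i) + p.2 • w n‖ ≤
        ‖((∑ i, q.1 i • v i) + q.2 • w n) - ((∑ i, p.1 i • v i) + p.2 • w n)‖ :=
      norm_sub_norm_le _ _
    have h2 : ((∑ i, q.1 i • v i) + q.2 • w n) - ((∑ i, p.1 i • v i) + p.2 • w n) =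
        ((∑ i, q.1 i • v i) - (∑ i, p.1 i • v i)) + (q.2 - p.2) • w n := by
      rw [sub_smul]; abel
    have h3 : ‖((∑ i, q.1 i • v i) - (∑ i, p.1 i • v i)) + (q.2 - p.2) • w n‖ ≤
        dist q p * V + |q.2 - p.2| * ‖w n‖ := by
      refine (norm_add_le _ _).trans ?_
      gcongr
      · exact hZdiff q p
      · rw [norm_smul, Real.norm_eq_abs]
    have h4 : |q.2 - p.2| * ‖w n‖ ≤ dist p q * C' := by
      have := hsnd q p
      rw [dist_comm q p] at this
      exact mul_le_mul this (hw n) (norm_nonneg _) dist_nonneg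
    have h5 : dist q p = dist p q := dist_comm _ _
    have hd0 : (0:ℝ) ≤ dist p q := dist_nonneg
    calc ‖(∑ i, q.1 i • v i) + q.2 • w n‖ - ‖(∑ i, p.1 i • v i) + p.2 • w n‖
        ≤ dist q p * V + |q.2 - p.2| * ‖w n‖ := by
          refine h1.trans ?_; rw [h2]; exact h3
      _ ≤ dist p q * V + dist p q * C' := by rw [h5]; exact add_le_add le_rfl h4
      _ ≤ L * dist p q := by nlinarith [ha, hd0, hV0, hC0, hLdef]
  have hglip : ∀ (p q : (Fin K → ℝ) × ℝ),
      (‖∑ i, p.1 i • v i‖ + |p.2| * a) - (‖∑ i, q.1 i • v i‖ + |q.2| * a) ≤ L * dist p q := by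
    intro p q
    have h1 : ‖∑ i, p.1 i • v i‖ - ‖∑ i, q.1 i • v i‖ ≤ dist p q * V :=
      (norm_sub_norm_le _ _).trans (hZdiff p q)
    have h2 : |p.2| - |q.2| ≤ dist p q := le_trans (abs_sub_abs_le_abs_sub _ _) (hsnd p q)
    have hd0 : (0:ℝ) ≤ dist p q := dist_nonneg
    nlinarith [ha, hd0, hC0, hV0, hLdef]
  -- compact sphere
  set S : Set ((Fin K → ℝ) × ℝ) := {p | (∑ i, |p.1 i|) + |p.2| = 1} with hSdef
  have hNcont : Continuous fun p : (Fin K → ℝ) × ℝ => (∑ i, |p.1 i|) + |p.2| := by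
    refine Continuous.add ?_ ?_
    · exact continuous_finset_sum _ fun i _ => ((continuous_apply i).comp continuous_fst).abs
    · exact continuous_snd.abs
  have hScl : IsClosed S := isClosed_eq hNcont continuous_const
  have hSbd : Bornology.IsBounded S := by
    refine (Metric.isBounded_closedBall (x := (0 : (Fin K → ℝ) × ℝ)) (r := 1)).subset ?_
    intro p hp
    have hp' : (∑ i, |p.1 i|) + |p.2| = 1 := hp
    have habs : ∀ i, |p.1 i| ≤ 1 := by
      intro i
      have h1 : |p.1 i| ≤ ∑ j, |p.1 j| :=
        Finset.single_le_sum (f := fun j => |p.1 j|) (fun j _ => abs_nonneg _) (Finset.mem_univ i)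
      have h2 : (0:ℝ) ≤ |p.2| := abs_nonneg _
      linarith
    have hp2 : |p.2| ≤ 1 := by
      have h1 : (0:ℝ) ≤ ∑ j, |p.1 j| := Finset.sum_nonneg fun j _ => abs_nonneg _
      linarith
    simp only [Metric.mem_closedBall, dist_zero_right]
    rw [Prod.norm_def]
    refine max_le ?_ ?_
    · exact (pi_norm_le_iff_of_nonneg zero_le_one).2 fun i => by
        rw [Real.norm_eq_abs]; exact habs i
    · rw [Real.norm_eq_abs]; exact hp2
  have hScomp : IsCompact S := Metric.isCompact_of_isClosed_isBounded hScl hSbd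
  -- finite subcover
  have hcov : S ⊆ ⋃ q : S, Metric.ball (q : (Fin K → ℝ) × ℝ) δ := fun p hp =>
    Set.mem_iUnion.2 ⟨⟨p, hp⟩, Metric.mem_ball_self hδ0⟩
  obtain ⟨F, hF⟩ := hScomp.elim_finite_subcover
    (fun q : S => Metric.ball (q : (Fin K → ℝ) × ℝ) δ) (fun _ => Metric.isOpen_ball) hcov
  -- eventual pointwise bounds on the net
  have hev : ∀ᶠ n in atTop, N₀ ≤ n ∧ ∀ q ∈ F,
      ‖∑ i, (q : (Fin K → ℝ) × ℝ).1 i • v i‖ + |(q : (Fin K → ℝ) × ℝ).2| * a - ε / 2 <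
        ‖(∑ i, (q : (Fin K → ℝ) × ℝ).1 i • v i) + (q : (Fin K → ℝ) × ℝ).2 • w n‖ := by
    refine (eventually_ge_atTop N₀).and ((eventually_all_finset F).2 fun q _ => ?_)
    exact MI (∑ i, (q : (Fin K → ℝ) × ℝ).1 i • v i) (q : (Fin K → ℝ) × ℝ).2 (ε / 2) (by positivity)
  obtain ⟨n, hnN, hn⟩ := hev.exists
  refine ⟨n, hnN, ?_⟩
  intro α t
  by_cases hs : (∑ i, |α i|) + |t| = 0
  · have hsum0 : ∑ i, |α i| = 0 := by
      have h1 : (0:ℝ) ≤ ∑ i, |α i| := Finset.sum_nonneg fun i _ => abs_nonneg _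
      have h2 : (0:ℝ) ≤ |t| := abs_nonneg _
      linarith
    have ht0 : t = 0 := by
      have h1 : (0:ℝ) ≤ ∑ i, |α i| := Finset.sum_nonneg fun i _ => abs_nonneg _
      have : |t| = 0 := by linarith
      exact abs_eq_zero.1 this
    have hα : ∀ i ∈ Finset.univ, α i • v i = (0 : X) := by
      intro i _
      have : |α i| = 0 := le_antisymm
        (hsum0 ▸ Finset.single_le_sum (fun j _ => abs_nonneg (α j)) (Finset.mem_univ i))
        (abs_nonneg _)
      rw [abs_eq_zero.1 this, zero_smul]
    rw [Finset.sum_eq_zero hα, ht0]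
    simp [hsum0]
  · set s : ℝ := (∑ i, |α i|) + |t| with hsdef
    have hs0 : 0 < s := by
      have h1 : (0:ℝ) ≤ s := by
        rw [hsdef]
        have := Finset.sum_nonneg (fun i (_ : i ∈ Finset.univ) => abs_nonneg (α i))
        have := abs_nonneg t
        linarith
      exact lt_of_le_of_ne h1 (Ne.symm hs)
    set p : (Fin K → ℝ) × ℝ := (fun i => s⁻¹ * α i, s⁻¹ * t) with hpdef
    have hpS : p ∈ S := by
      show (∑ i, |s⁻¹ * α i|) + |s⁻¹ * t| = 1
      have : ∀ i, |s⁻¹ * α i| = s⁻¹ * |α i| := fun i => by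
        rw [abs_mul, abs_of_pos (inv_pos.2 hs0)]
      rw [Finset.sum_congr rfl fun i _ => this i, ← Finset.mul_sum, abs_mul,
        abs_of_pos (inv_pos.2 hs0), ← mul_add, ← hsdef, inv_mul_cancel₀ hs0.ne']
    obtain ⟨q, hqF, hpq⟩ := Set.mem_iUnion₂.1 (hF hpS)
    have hdist : dist p (q : (Fin K → ℝ) × ℝ) < δ := by
      exact Metric.mem_ball.1 hpq
    have h3 := hn q hqF
    have h4 := hGlip n p (q : (Fin K → ℝ) × ℝ)
    have h5 := hglip p (q : (Fin K → ℝ) × ℝ)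
    have hLd : L * dist p (q : (Fin K → ℝ) × ℝ) ≤ ε / 4 := by
      have := mul_le_mul_of_nonneg_left hdist.le hL0.le
      rw [hδdef] at this
      calc L * dist p (q : (Fin K → ℝ) × ℝ) ≤ L * (ε / (4 * L)) := this
        _ = ε / 4 := by field_simp
    -- conclusion on the sphere point p
    have hball : ‖∑ i, p.1 i • v i‖ + |p.2| * a - ε ≤ ‖(∑ i, p.1 i • v i) + p.2 • w n‖ := by
      have p1 : ‖(∑ i, (q : (Fin K → ℝ) × ℝ).1 i • v i) + (q : (Fin K → ℝ) × ℝ).2 • w n‖ - ‖(∑ i, p.1 i • v i) + p.2 • w n‖ ≤ L * dist p (q : (Fin K → ℝ) × ℝ) := h4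
      have p2 : (‖∑ i, p.1 i • v i‖ + |p.2| * a) - (‖∑ i, (q : (Fin K → ℝ) × ℝ).1 i • v i‖ + |(q : (Fin K → ℝ) × ℝ).2| * a) ≤ L * dist p (q : (Fin K → ℝ) × ℝ) := h5
      have p3 : ‖∑ i, (q : (Fin K → ℝ) × ℝ).1 i • v i‖ + |(q : (Fin K → ℝ) × ℝ).2| * a - ε / 2 < ‖(∑ i, (q : (Fin K → ℝ) × ℝ).1 i • v i) + (q : (Fin K → ℝ) × ℝ).2 • w n‖ := h3
      generalize hA : ‖(∑ i, p.1 i • v i) + p.2 • w n‖ = GP at p1 ⊢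
      generalize hB : ‖(∑ i, (q : (Fin K → ℝ) × ℝ).1 i • v i) + (q : (Fin K → ℝ) × ℝ).2 • w n‖ = GQ at p1 p3
      generalize hC : ‖∑ i, p.1 i • v i‖ = gp1 at p2 ⊢
      generalize hD : ‖∑ i, (q : (Fin K → ℝ) × ℝ).1 i • v i‖ = gq1 at p2 p3
      generalize hE : L * dist p (q : (Fin K → ℝ) × ℝ) = Ld at p1 p2 hLd
      linarith [p1, p2, p3, hLd]
    -- rescale
    have hsmul1 : ∑ i, p.1 i • v i = s⁻¹ • ∑ i, α i • v i := by
      rw [Finset.smul_sum]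
      refine Finset.sum_congr rfl fun i _ => ?_
      show (s⁻¹ * α i) • v i = s⁻¹ • α i • v i
      rw [mul_smul]
    have hsmul2 : (∑ i, p.1 i • v i) + p.2 • w n = s⁻¹ • ((∑ i, α i • v i) + t • w n) := by
      rw [hsmul1, smul_add]
      congr 1
      show (s⁻¹ * t) • w n = s⁻¹ • t • w n
      rw [mul_smul]
    have hn1 : ‖∑ i, p.1 i • v i‖ = s⁻¹ * ‖∑ i, α i • v i‖ := by
      rw [hsmul1, norm_smul, Real.norm_eq_abs, abs_of_pos (inv_pos.2 hs0)]
    have hn2 : ‖(∑ i, p.1 i • v i) + p.2 • w n‖ = s⁻¹ * ‖(∑ i, α i • v i) + t • w n‖ := by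
      rw [hsmul2, norm_smul, Real.norm_eq_abs, abs_of_pos (inv_pos.2 hs0)]
    have hn3 : |p.2| = s⁻¹ * |t| := by
      show |s⁻¹ * t| = s⁻¹ * |t|
      rw [abs_mul, abs_of_pos (inv_pos.2 hs0)]
    rw [hn1, hn2, hn3] at hball
    have := mul_le_mul_of_nonneg_left hball hs0.le
    have hss : s * s⁻¹ = 1 := mul_inv_cancel₀ hs0.ne'
    calc ‖∑ i, α i • v i‖ + |t| * a - ε * ((∑ i, |α i|) + |t|)
        = s * (s⁻¹ * ‖∑ i, α i • v i‖ + s⁻¹ * |t| * a - ε) := by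
          rw [← hsdef]; field_simp
      _ ≤ s * (s⁻¹ * ‖(∑ i, α i • v i) + t • w n‖) := this
      _ = ‖(∑ i, α i • v i) + t • w n‖ := by field_simp

private noncomputable def buildSeqWSC (T : ∀ K : ℕ, (Fin K → ℕ) → ℕ) : (K : ℕ) → Fin K → ℕ
  | 0 => Fin.elim0
  | (K + 1) => Fin.snoc (buildSeqWSC T K) (T K (buildSeqWSC T K))

private lemma exists_l1_seq {a C' : ℝ} (ha : 0 < a) (w : ℕ → X) (hw : ∀ n, ‖w n‖ ≤ C')
    (MI : ∀ (z : X) (t : ℝ) (ε : ℝ), 0 < ε →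
      ∀ᶠ n in atTop, ‖z‖ + |t| * a - ε < ‖z + t • w n‖) :
    ∃ ns : ℕ → ℕ, (∀ k, k ≤ ns k) ∧ ∀ (K : ℕ) (α : ℕ → ℝ),
      a / 2 * (∑ i ∈ Finset.range K, |α i|) ≤ ‖∑ i ∈ Finset.range K, α i • w (ns i)‖ := by
  classical
  have hstep : ∀ (K : ℕ) (v : Fin K → ℕ), ∃ n, K ≤ n ∧ ∀ (α : Fin K → ℝ) (t : ℝ),
      ‖∑ i, α i • w (v i)‖ + |t| * a - a / 2 ^ (K + 2) * ((∑ i, |α i|) + |t|) ≤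
        ‖(∑ i, α i • w (v i)) + t • w n‖ :=
    fun K v => step_lemma ha w hw MI K K (fun i => w (v i)) (by positivity)
  choose T hT1 hT2 using hstep
  set b : ∀ K : ℕ, Fin K → ℕ := buildSeqWSC T with hbdef
  have hbsucc : ∀ K, b (K + 1) = Fin.snoc (b K) (T K (b K)) := fun K => rfl
  have good : ∀ K : ℕ, (∀ i : Fin K, (i : ℕ) ≤ b K i) ∧ ∀ α : Fin K → ℝ,
      (a - ∑ j ∈ Finset.range K, a / 2 ^ (j + 2)) * (∑ i, |α i|) ≤
        ‖∑ i, α i • w (b K i)‖ := by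
    intro K
    induction K with
    | zero =>
        refine ⟨fun i => i.elim0, fun α => ?_⟩
        simp
    | succ K ih =>
        constructor
        · intro i
          refine Fin.lastCases ?_ ?_ i
          · rw [hbsucc]
            simpa using hT1 K (b K)
          · intro j
            rw [hbsucc]
            simpa using ih.1 j
        · intro α
          rw [hbsucc]
          simp only [Fin.sum_univ_castSucc, Fin.snoc_castSucc, Fin.snoc_last]
          have h2 := hT2 K (b K) (fun i => α i.castSucc) (α (Fin.last K))
          have h3 := ih.2 (fun i => α i.castSucc)
          have hS0 : (0:ℝ) ≤ ∑ j ∈ Finset.range K, a / 2 ^ (j + 2) :=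
            Finset.sum_nonneg fun j _ => by positivity
          have hSsucc : ∑ j ∈ Finset.range (K + 1), a / 2 ^ (j + 2) =
              (∑ j ∈ Finset.range K, a / 2 ^ (j + 2)) + a / 2 ^ (K + 2) :=
            Finset.sum_range_succ _ _
          have hu : (0:ℝ) ≤ |α (Fin.last K)| := abs_nonneg _
          have hsums : (0:ℝ) ≤ ∑ i : Fin K, |α i.castSucc| :=
            Finset.sum_nonneg fun i _ => abs_nonneg _
          rw [hSsucc]
          nlinarith [h2, h3, mul_nonneg hS0 hu]
  set ns : ℕ → ℕ := fun k => b (k + 1) (Fin.last k) with hnsdef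
  have hcomp : ∀ (K : ℕ) (i : Fin K), b K i = ns (i : ℕ) := by
    intro K
    induction K with
    | zero => exact fun i => i.elim0
    | succ K ih =>
        intro i
        refine Fin.lastCases ?_ ?_ i
        · simp [hnsdef]
        · intro j
          have h1 : b (K + 1) (Fin.castSucc j) = b K j := by
            rw [hbsucc]; simp
          rw [h1, ih j]
          simp
  have hSle : ∀ K : ℕ, ∑ j ∈ Finset.range K, a / 2 ^ (j + 2) ≤ a / 2 := by
    intro K
    have h1 : ∀ j ∈ Finset.range K, a / 2 ^ (j + 2) = a / 4 * (1 / 2) ^ j := by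
      intro j _
      have h2 : ((2:ℝ)) ^ (j + 2) = 2 ^ j * 4 := by rw [pow_add]; norm_num
      rw [h2, div_pow, one_pow, mul_one_div, div_div]
      ring
    rw [Finset.sum_congr rfl h1, ← Finset.mul_sum]
    have h2 := sum_geometric_two_le K
    nlinarith [ha]
  refine ⟨ns, ?_, ?_⟩
  · intro k
    have := (good (k + 1)).1 (Fin.last k)
    simpa [hnsdef] using this
  · intro K α
    have h := (good K).2 (fun i : Fin K => α (i : ℕ))
    have hrw1 : ∑ i : Fin K, α (i : ℕ) • w (b K i) = ∑ i ∈ Finset.range K, α i • w (ns i) := by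
      rw [← Fin.sum_univ_eq_sum_range (fun i => α i • w (ns i)) K]
      exact Finset.sum_congr rfl fun i _ => by rw [hcomp K i]
    have hrw2 : ∑ i : Fin K, |α (i : ℕ)| = ∑ i ∈ Finset.range K, |α i| :=
      Fin.sum_univ_eq_sum_range (fun i => |α i|) K
    rw [hrw1, hrw2] at h
    have hc : a / 2 ≤ a - ∑ j ∈ Finset.range K, a / 2 ^ (j + 2) := by
      have := hSle K; linarith
    have habs : (0:ℝ) ≤ ∑ i ∈ Finset.range K, |α i| :=
      Finset.sum_nonneg fun i _ => abs_nonneg _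
    calc a / 2 * (∑ i ∈ Finset.range K, |α i|)
        ≤ (a - ∑ j ∈ Finset.range K, a / 2 ^ (j + 2)) * (∑ i ∈ Finset.range K, |α i|) :=
          mul_le_mul_of_nonneg_right hc habs
      _ ≤ ‖∑ i ∈ Finset.range K, α i • w (ns i)‖ := h

end AuxWSC

set_option maxHeartbeats 2000000 in
private theorem wsc_core {X : Type*} [NormedAddCommGroup X] [NormedSpace ℝ X] [CompleteSpace X]
    (hX : ∃ P : StrongDual ℝ (StrongDual ℝ X) →L[ℝ] StrongDual ℝ (StrongDual ℝ X),
      (∀ ξ, P (P ξ) = P ξ) ∧ (∀ ξ, ‖ξ‖ = ‖P ξ‖ + ‖ξ - P ξ‖) ∧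
        Set.range P = Set.range (inclusionInDoubleDual ℝ X))
    (x : ℕ → X)
    (hweakCauchy : ∀ f : StrongDual ℝ X, ∃ l : ℝ, Tendsto (fun n => f (x n)) atTop (nhds l)) :
    ∃ y : X, ∀ f : StrongDual ℝ X, Tendsto (fun n => f (x n)) atTop (nhds (f y)) := by
  classical
  obtain ⟨P, hP1, hP2, hPr⟩ := hX
  choose l hl using hweakCauchy
  -- uniform boundedness
  have hpb : ∀ f : StrongDual ℝ X, ∃ C : ℝ, ∀ n : ℕ, ‖(inclusionInDoubleDual ℝ X (x n)) f‖ ≤ C := by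
    intro f
    obtain ⟨C, hC⟩ := ((hl f).abs).bddAbove_range
    refine ⟨C, fun n => ?_⟩
    have h1 : |f (x n)| ≤ C := hC ⟨n, rfl⟩
    simpa [Real.norm_eq_abs] using h1
  obtain ⟨C, hC⟩ := banach_steinhaus (g := fun n : ℕ => inclusionInDoubleDual ℝ X (x n)) hpb
  have hxb : ∀ n, ‖x n‖ ≤ C := by
    intro n
    have h1 : ‖inclusionInDoubleDual ℝ X (x n)‖ = ‖x n‖ :=
      (inclusionInDoubleDualLi ℝ).norm_map (x n)
    rw [← h1]; exact hC n
  -- the limit functional ξ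
  have hladd : ∀ f g : StrongDual ℝ X, l (f + g) = l f + l g := by
    intro f g
    refine tendsto_nhds_unique (hl (f + g)) ?_
    have := (hl f).add (hl g)
    simpa using this
  have hlsmul : ∀ (c : ℝ) (f : StrongDual ℝ X), l (c • f) = c * l f := by
    intro c f
    refine tendsto_nhds_unique (hl (c • f)) ?_
    have := (hl f).const_mul c
    simpa [mul_comm] using this
  have hlbound : ∀ f : StrongDual ℝ X, ‖l f‖ ≤ C * ‖f‖ := by
    intro f
    refine le_of_tendsto (hl f).norm (Filter.Eventually.of_forall fun n => ?_)
    calc ‖f (x n)‖ ≤ ‖f‖ * ‖x n‖ := f.le_opNorm _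
      _ ≤ ‖f‖ * C := mul_le_mul_of_nonneg_left (hxb n) (norm_nonneg f)
      _ = C * ‖f‖ := mul_comm _ _
  set ξ : StrongDual ℝ (StrongDual ℝ X) :=
    LinearMap.mkContinuous
      { toFun := l
        map_add' := hladd
        map_smul' := fun c f => by simpa [smul_eq_mul] using hlsmul c f } C hlbound with hξdef
  have hξapp : ∀ f : StrongDual ℝ X, ξ f = l f := fun f => rfl
  by_cases hfix : P ξ = ξ
  · have hmem : ξ ∈ Set.range P := ⟨ξ, hfix⟩
    rw [hPr] at hmem
    obtain ⟨y, hy⟩ := hmem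
    refine ⟨y, fun f => ?_⟩
    have h1 : f y = l f := by
      have h2 := congrArg (fun Φ : StrongDual ℝ (StrongDual ℝ X) => Φ f) hy
      simpa [hξapp] using h2
    rw [h1]; exact hl f
  · exfalso
    have hmem : P ξ ∈ Set.range P := ⟨ξ, rfl⟩
    rw [hPr] at hmem
    obtain ⟨y, hy⟩ := hmem
    have hPξf : ∀ f : StrongDual ℝ X, (P ξ) f = f y := by
      intro f; rw [← hy]; rfl
    set ζ : StrongDual ℝ (StrongDual ℝ X) := ξ - P ξ with hζdef
    have hζ0 : ζ ≠ 0 := sub_ne_zero.2 (Ne.symm hfix)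
    have ha : 0 < ‖ζ‖ :=
      lt_of_le_of_ne (norm_nonneg ζ) fun h => hζ0 ((ContinuousLinearMap.opNorm_zero_iff ζ).1 h.symm)
    set w : ℕ → X := fun n => x n - y with hwdef
    have hwb : ∀ n, ‖w n‖ ≤ C + ‖y‖ := fun n =>
      (norm_sub_le _ _).trans (by have := hxb n; linarith)
    have hPJ : ∀ z : X, P (inclusionInDoubleDual ℝ X z) = inclusionInDoubleDual ℝ X z := by
      intro z
      have hmem2 : inclusionInDoubleDual ℝ X z ∈ Set.range P := by
        rw [hPr]; exact ⟨z, rfl⟩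
      obtain ⟨η, hη⟩ := hmem2
      rw [← hη, hP1, hη]
    have hPζ : P ζ = 0 := by
      rw [hζdef, map_sub, hP1, sub_self]
    have hζf : ∀ f : StrongDual ℝ X, ζ f = l f - f y := by
      intro f
      rw [hζdef, ContinuousLinearMap.sub_apply, hξapp, hPξf]
    clear_value ζ
    clear hζdef
    have hL : ∀ (z : X) (t : ℝ),
        ‖inclusionInDoubleDual ℝ X z + t • ζ‖ = ‖z‖ + |t| * ‖ζ‖ := by
      intro z t
      have h1 : P (inclusionInDoubleDual ℝ X z + t • ζ) = inclusionInDoubleDual ℝ X z := by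
        rw [map_add, map_smul, hPζ, smul_zero, add_zero, hPJ]
      have h2 := hP2 (inclusionInDoubleDual ℝ X z + t • ζ)
      rw [h1, add_sub_cancel_left] at h2
      have hnm : ‖inclusionInDoubleDual ℝ X z‖ = ‖z‖ := (inclusionInDoubleDualLi ℝ).norm_map z
      rw [h2, hnm, norm_smul, Real.norm_eq_abs]
    have hwc : ∀ f : StrongDual ℝ X, Tendsto (fun n => f (w n)) atTop (𝓝 (ζ f)) := by
      intro f
      rw [hζf f]
      have h2 := (hl f).sub_const (f y)
      have h3 : (fun n => f (x n) - f y) = fun n => f (w n) := by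
        funext n; rw [hwdef]; simp [map_sub]
      rwa [h3] at h2
    -- master inequality from weak* lower semicontinuity and the L-identity
    have MI : ∀ (z : X) (t : ℝ) (ε : ℝ), 0 < ε →
        ∀ᶠ n in atTop, ‖z‖ + |t| * ‖ζ‖ - ε < ‖z + t • w n‖ := by
      intro z t ε hε
      rcases lt_or_ge (‖z‖ + |t| * ‖ζ‖) ε with hcase | hcase
      · refine Filter.Eventually.of_forall fun n => ?_
        have := norm_nonneg (z + t • w n)
        linarith
      · set Λ : StrongDual ℝ (StrongDual ℝ X) := inclusionInDoubleDual ℝ X z + t • ζ with hΛdef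
        have hΛ : ‖Λ‖ = ‖z‖ + |t| * ‖ζ‖ := hL z t
        have hcon : ¬ ∀ f : StrongDual ℝ X, ‖Λ f‖ ≤ (‖z‖ + |t| * ‖ζ‖ - ε / 2) * ‖f‖ := by
          intro hall
          have h0 : (0:ℝ) ≤ ‖z‖ + |t| * ‖ζ‖ - ε / 2 := by linarith
          have h1 := ContinuousLinearMap.opNorm_le_bound Λ h0 hall
          rw [hΛ] at h1
          linarith
        push_neg at hcon
        obtain ⟨f, hf⟩ := hcon
        have hf0 : 0 < ‖f‖ := by
          by_contra hle
          push_neg at hle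
          have hfn : ‖f‖ = 0 := le_antisymm hle (norm_nonneg f)
          have hfz : f = 0 := norm_eq_zero.1 hfn
          rw [hfn, mul_zero, hfz] at hf
          simp at hf
        have hΛf : Λ f = f z + t * ζ f := by
          rw [hΛdef]
          simp [ContinuousLinearMap.add_apply, ContinuousLinearMap.smul_apply, smul_eq_mul]
        have hev : Tendsto (fun n => f z + t * f (w n)) atTop (𝓝 (Λ f)) := by
          rw [hΛf]
          exact tendsto_const_nhds.add ((hwc f).const_mul t)
        have hgt : (‖z‖ + |t| * ‖ζ‖ - ε) * ‖f‖ < ‖Λ f‖ := by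
          nlinarith [hf, mul_pos (half_pos hε) hf0]
        have hev2 : Tendsto (fun n => ‖f z + t * f (w n)‖) atTop (𝓝 ‖Λ f‖) := hev.norm
        filter_upwards [hev2.eventually (eventually_gt_nhds hgt)] with n hn
        have h6 : f (z + t • w n) = f z + t * f (w n) := by
          rw [map_add, map_smul, smul_eq_mul]
        have h5 : ‖f (z + t • w n)‖ ≤ ‖f‖ * ‖z + t • w n‖ := f.le_opNorm _
        rw [h6] at h5
        have h7 : (‖z‖ + |t| * ‖ζ‖ - ε) * ‖f‖ < ‖z + t • w n‖ * ‖f‖ := by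
          calc (‖z‖ + |t| * ‖ζ‖ - ε) * ‖f‖ < ‖f z + t * f (w n)‖ := hn
            _ ≤ ‖f‖ * ‖z + t • w n‖ := h5
            _ = ‖z + t • w n‖ * ‖f‖ := mul_comm _ _
        exact lt_of_mul_lt_mul_right h7 hf0.le
    -- extract the ℓ¹ subsequence
    obtain ⟨ns, hns1, hns2⟩ := exists_l1_seq ha w hwb MI
    set d : ℕ → X := fun k => w (ns (2 * k)) - w (ns (2 * k + 1)) with hddef
    have hd0 : ∀ f : StrongDual ℝ X, Tendsto (fun k => f (d k)) atTop (𝓝 0) := by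
      intro f
      have h1 : Tendsto (fun k : ℕ => ns (2 * k)) atTop atTop := by
        refine tendsto_atTop_mono ?_ tendsto_id
        intro k
        simp only [id_eq]
        have := hns1 (2 * k); omega
      have h2 : Tendsto (fun k : ℕ => ns (2 * k + 1)) atTop atTop := by
        refine tendsto_atTop_mono ?_ tendsto_id
        intro k
        simp only [id_eq]
        have := hns1 (2 * k + 1); omega
      have h3 := ((hwc f).comp h1).sub ((hwc f).comp h2)
      simpa [hddef, Function.comp, map_sub] using h3
    -- the convex set of averages of the differences
    set A : Set X := {u | ∃ (K : ℕ) (μ : ℕ → ℝ), (∀ k, 0 ≤ μ k) ∧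
        (∑ k ∈ Finset.range K, μ k = 1) ∧ u = ∑ k ∈ Finset.range K, μ k • d k} with hAdef
    have hext : ∀ (K K' : ℕ), K ≤ K' → ∀ μ : ℕ → ℝ,
        ∑ k ∈ Finset.range K', (if k < K then μ k else 0) • d k
          = ∑ k ∈ Finset.range K, μ k • d k := by
      intro K K' hKK' μ
      rw [← Finset.sum_subset (Finset.range_subset_range.2 hKK')]
      · exact Finset.sum_congr rfl fun k hk => by rw [if_pos (Finset.mem_range.1 hk)]
      · intro k _ hk
        rw [if_neg fun h => hk (Finset.mem_range.2 h), zero_smul]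
    have hextR : ∀ (K K' : ℕ), K ≤ K' → ∀ μ : ℕ → ℝ,
        ∑ k ∈ Finset.range K', (if k < K then μ k else 0)
          = ∑ k ∈ Finset.range K, μ k := by
      intro K K' hKK' μ
      rw [← Finset.sum_subset (Finset.range_subset_range.2 hKK')]
      · exact Finset.sum_congr rfl fun k hk => by rw [if_pos (Finset.mem_range.1 hk)]
      · intro k _ hk
        rw [if_neg fun h => hk (Finset.mem_range.2 h)]
    have hconv : Convex ℝ A := by
      rintro u ⟨K₁, μ, hμ0, hμ1, hμs⟩ v ⟨K₂, ν, hν0, hν1, hνs⟩ θ τ hθ hτ hθτ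
      refine ⟨max K₁ K₂,
        fun k => θ * (if k < K₁ then μ k else 0) + τ * (if k < K₂ then ν k else 0), ?_, ?_, ?_⟩
      · intro k
        have h1 : (0:ℝ) ≤ (if k < K₁ then μ k else 0) := by
          split
          · exact hμ0 k
          · exact le_rfl
        have h2 : (0:ℝ) ≤ (if k < K₂ then ν k else 0) := by
          split
          · exact hν0 k
          · exact le_rfl
        exact add_nonneg (mul_nonneg hθ h1) (mul_nonneg hτ h2)
      · rw [Finset.sum_add_distrib, ← Finset.mul_sum, ← Finset.mul_sum,
          hextR K₁ _ (le_max_left _ _) μ, hextR K₂ _ (le_max_right _ _) ν, hμ1, hν1,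
          mul_one, mul_one]
        exact hθτ
      · rw [hμs, hνs, ← hext K₁ _ (le_max_left _ _) μ, ← hext K₂ _ (le_max_right _ _) ν,
          Finset.smul_sum, Finset.smul_sum, ← Finset.sum_add_distrib]
        refine Finset.sum_congr rfl fun k _ => ?_
        rw [add_smul, mul_smul, mul_smul]
    have hA1 : ∀ u ∈ A, ‖ζ‖ ≤ ‖u‖ := by
      rintro u ⟨K, μ, hμ0, hμ1, rfl⟩
      set β : ℕ → ℝ := fun i => if i % 2 = 0 then μ (i / 2) else -(μ (i / 2)) with hβdef
      have e1 : ∑ i ∈ Finset.range (2 * K), β i • w (ns i)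
          = ∑ k ∈ Finset.range K, μ k • d k := by
        rw [sum_pair_aux (fun i => β i • w (ns i)) K]
        refine Finset.sum_congr rfl fun k _ => ?_
        have ha1 : (2 * k) % 2 = 0 := by omega
        have ha2 : (2 * k) / 2 = k := by omega
        have ha3 : ¬((2 * k + 1) % 2 = 0) := by omega
        have ha4 : (2 * k + 1) / 2 = k := by omega
        rw [hβdef]
        simp only [ha1, ha2, ha3, ha4, if_true, if_false]
        rw [hddef, neg_smul, ← sub_eq_add_neg, ← smul_sub]
      have e2 : ∑ i ∈ Finset.range (2 * K), |β i| = 2 := by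
        rw [sum_pair_aux (fun i => |β i|) K]
        have h1 : ∀ k ∈ Finset.range K, |β (2 * k)| + |β (2 * k + 1)| = 2 * μ k := by
          intro k _
          have ha1 : (2 * k) % 2 = 0 := by omega
          have ha2 : (2 * k) / 2 = k := by omega
          have ha3 : ¬((2 * k + 1) % 2 = 0) := by omega
          have ha4 : (2 * k + 1) / 2 = k := by omega
          rw [hβdef]
          simp only [ha1, ha2, ha3, ha4, if_true, if_false]
          rw [abs_neg, abs_of_nonneg (hμ0 k)]
          ring
        rw [Finset.sum_congr rfl h1, ← Finset.mul_sum, hμ1, mul_one]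
      have h3 := hns2 (2 * K) β
      rw [e1, e2] at h3
      calc ‖ζ‖ = ‖ζ‖ / 2 * 2 := by ring
        _ ≤ ‖∑ k ∈ Finset.range K, μ k • d k‖ := h3
    have h0A : (0 : X) ∉ closure A := by
      intro h0
      obtain ⟨u, huA, hud⟩ := Metric.mem_closure_iff.1 h0 ‖ζ‖ ha
      have h1 := hA1 u huA
      rw [dist_zero_left] at hud
      linarith
    obtain ⟨f, u0, hu1, hu2⟩ :=
      geometric_hahn_banach_point_closed hconv.closure isClosed_closure h0A
    have hf00 : (0:ℝ) < u0 := by simpa using hu1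
    have hdkA : ∀ k : ℕ, d k ∈ A := by
      intro k
      refine ⟨k + 1, fun j => if j = k then 1 else 0, ?_, ?_, ?_⟩
      · intro j
        by_cases hj : j = k <;> simp [hj]
      · rw [Finset.sum_ite_eq' (Finset.range (k + 1)) k fun _ => (1:ℝ)]
        rw [if_pos (Finset.mem_range.2 (Nat.lt_succ_self k))]
      · have h1 : ∀ j ∈ Finset.range (k + 1),
            (if j = k then (1:ℝ) else 0) • d j = if j = k then d j else 0 := by
          intro j _
          split
          · rw [one_smul]
          · rw [zero_smul]
        rw [Finset.sum_congr rfl h1,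
          Finset.sum_ite_eq' (Finset.range (k + 1)) k fun j => d j,
          if_pos (Finset.mem_range.2 (Nat.lt_succ_self k))]
    have hdk : ∀ k, u0 < f (d k) := fun k => hu2 _ (subset_closure (hdkA k))
    have hlim := hd0 f
    have hfin : u0 ≤ 0 :=
      ge_of_tendsto hlim (Filter.Eventually.of_forall fun k => (hdk k).le)
    linarith

theorem stmt10 {X : Type*} [NormedAddCommGroup X] [NormedSpace ℝ X] [CompleteSpace X] (hX : IsLEmbedded X)
    (x : ℕ → X)
    (hweakCauchy : ∀ f : StrongDual ℝ X, ∃ l : ℝ, Tendsto (fun n => f (x n)) atTop (nhds l)) :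
    ∃ y : X, ∀ f : StrongDual ℝ X, Tendsto (fun n => f (x n)) atTop (nhds (f y)) := by
  exact wsc_core hX x hweakCauchy
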